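/- Let G be a 3-regular (cubic) simple graph of order 10. Let t be the number of 4-subsets of V(G) whose induced subgraph is isomorphic to K4 minus one edge, and let s be the number of 4-subsets of V(G) whose induced subgraph is isomorphic to K4. Then d(G,6) = C(10,6) − (10 − t − 3s). -/

import Mathlib

/-- `S` is a dominating set of `G`: every vertex not in `S` is adjacent to some vertex of `S`. -/
def IsDomSet {V : Type*} (G : SimpleGraph V) (S : Finset V) : Prop :=
  ∀ v : V, v ∉ S → ∃ u ∈ S, G.Adj u v

/-- `d(G,i)`: the number of dominating sets of `G` of cardinality `i`. -/
noncomputable def domCount {V : Type*} (G : SimpleGraph V) (i : ℕ) : ℕ :=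
  {S : Finset V | IsDomSet G S ∧ S.card = i}.ncard

/-- `d_v(G,i)`: the number of dominating sets of `G` of cardinality `i` containing `v`. -/
noncomputable def domCountVert {V : Type*} (G : SimpleGraph V) (v : V) (i : ℕ) : ℕ :=
  {S : Finset V | IsDomSet G S ∧ S.card = i ∧ v ∈ S}.ncard

/-- The complete graph on four vertices minus one edge. -/
def K4MinusEdge : SimpleGraph (Fin 4) :=
  (⊤ : SimpleGraph (Fin 4)).deleteEdges {s(0, 1)}

open Finset

section
variable {V : Type*} [Fintype V] [DecidableEq V] (G : SimpleGraph V) [DecidableRel G.Adj]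

set_option linter.unusedSectionVars false
set_option linter.unnecessarySimpa false
set_option maxHeartbeats 1000000

def cnbr (v : V) : Finset V := insert v (G.neighborFinset v)

lemma mem_cnbr {v w : V} : w ∈ cnbr G v ↔ w = v ∨ G.Adj v w := by
  simp [cnbr]

lemma self_mem_cnbr (v : V) : v ∈ cnbr G v := by simp [cnbr]

lemma card_cnbr (hreg : G.IsRegularOfDegree 3) (v : V) : (cnbr G v).card = 4 := by
  rw [cnbr, card_insert_of_notMem (by simp), G.card_neighborFinset_eq_degree, hreg v]

lemma cnbr_eq_of (hreg : G.IsRegularOfDegree 3) {S : Finset V} (h4 : S.card = 4) {w : V}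
    (hw : w ∈ S) (hadj : ∀ x ∈ S, x ≠ w → G.Adj w x) : cnbr G w = S := by
  have hsub : S ⊆ cnbr G w := by
    intro x hx
    rcases eq_or_ne x w with rfl | hne
    · exact self_mem_cnbr G x
    · exact (mem_cnbr G).mpr (Or.inr (hadj x hx hne))
  exact ((eq_of_subset_of_card_le hsub (by rw [card_cnbr G hreg, h4]))).symm

/-- members of the fiber of `cnbr` over `S` lie in `S` -/
lemma fiber_mem {S : Finset V} {w : V} (h : cnbr G w = S) : w ∈ S :=
  h ▸ self_mem_cnbr G w

lemma fiber_clique (hreg : G.IsRegularOfDegree 3) {S : Finset V} (h4 : S.card = 4)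
    (hcl : ∀ u ∈ S, ∀ v ∈ S, u ≠ v → G.Adj u v) :
    univ.filter (fun v => cnbr G v = S) = S := by
  ext w
  simp only [mem_filter, mem_univ, true_and]
  constructor
  · exact fun h => fiber_mem G h
  · intro hw
    exact cnbr_eq_of G hreg h4 hw (fun x hx hxw => (hcl w hw x hx (Ne.symm hxw)))

lemma fiber_k4e (hreg : G.IsRegularOfDegree 3) {S : Finset V} (h4 : S.card = 4)
    {a b : V} (ha : a ∈ S) (hb : b ∈ S) (hab' : a ≠ b) (hab : ¬ G.Adj a b)
    (hadj : ∀ u ∈ S, ∀ v ∈ S, u ≠ v → ¬(u = a ∧ v = b) → ¬(u = b ∧ v = a) → G.Adj u v) :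
    univ.filter (fun v => cnbr G v = S) = S \ {a, b} := by
  ext w
  simp only [mem_filter, mem_univ, true_and, mem_sdiff, mem_insert, mem_singleton]
  constructor
  · intro h
    refine ⟨fiber_mem G h, ?_⟩
    rintro (rfl | rfl)
    · have hbmem : b ∈ cnbr G w := h ▸ hb
      rcases (mem_cnbr G).mp hbmem with rfl | hadj'
      · exact hab' rfl
      · exact hab hadj'
    · have hamem : a ∈ cnbr G w := h ▸ ha
      rcases (mem_cnbr G).mp hamem with rfl | hadj'
      · exact hab' rfl
      · exact hab hadj'.symm
  · rintro ⟨hw, hnab⟩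
    push_neg at hnab
    refine cnbr_eq_of G hreg h4 hw (fun x hx hxw => ?_)
    exact hadj w hw x hx (Ne.symm hxw) (fun h => hnab.1 h.1) (fun h => hnab.2 h.1)

lemma iso_top_of_clique {S : Finset V} (h4 : S.card = 4)
    (h : ∀ u ∈ S, ∀ v ∈ S, u ≠ v → G.Adj u v) :
    Nonempty (G.induce (S : Set V) ≃g (⊤ : SimpleGraph (Fin 4))) := by
  have hind : G.induce (S : Set V) = ⊤ := by
    ext a b
    simp only [SimpleGraph.comap_adj, SimpleGraph.top_adj]
    constructor
    · intro hadj
      exact fun hab => G.loopless.irrefl _ (hab ▸ hadj)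
    · intro hab
      exact h a (by simpa using a.2) b (by simpa using b.2) (fun h' => hab (Subtype.ext h'))
  rw [hind]
  exact ⟨SimpleGraph.Iso.completeGraph (Fintype.equivFinOfCardEq (by simp [h4]))⟩

lemma clique_of_iso_top {S : Finset V} 
    (h : Nonempty (G.induce (S : Set V) ≃g (⊤ : SimpleGraph (Fin 4)))) :
    ∀ u ∈ S, ∀ v ∈ S, u ≠ v → G.Adj u v := by
  obtain ⟨e⟩ := h
  intro u hu v hv huv
  have := e.map_rel_iff (a := ⟨u, by simpa using hu⟩) (b := ⟨v, by simpa using hv⟩)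
  rw [SimpleGraph.top_adj] at this
  have h2 : e ⟨u, by simpa using hu⟩ ≠ e ⟨v, by simpa using hv⟩ := by
    simp only [ne_eq, EmbeddingLike.apply_eq_iff_eq]
    exact fun h' => huv (congrArg Subtype.val h')
  exact this.mp h2

lemma k4e_adj {i j : Fin 4} : K4MinusEdge.Adj i j ↔ i ≠ j ∧ s(i,j) ≠ s(0,1) := by
  simp [K4MinusEdge]

lemma iso_k4e_of {S : Finset V} (h4 : S.card = 4) {u v a b : V}
    (hu : u ∈ S) (hv : v ∈ S) (ha : a ∈ S) (hb : b ∈ S)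
    (huv' : u ≠ v) (hua' : u ≠ a) (hub' : u ≠ b) (hva' : v ≠ a) (hvb' : v ≠ b) (hab' : a ≠ b)
    (huv : G.Adj u v) (hua : G.Adj u a) (hub : G.Adj u b) (hva : G.Adj v a) (hvb : G.Adj v b)
    (hab : ¬ G.Adj a b) :
    Nonempty (G.induce (S : Set V) ≃g K4MinusEdge) := by
  set g : Fin 4 → (S : Set V) :=
    ![⟨a, by simpa using ha⟩, ⟨b, by simpa using hb⟩, ⟨u, by simpa using hu⟩,
      ⟨v, by simpa using hv⟩] with hg
  have hinj : Function.Injective g := by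
    intro i j hij
    fin_cases i <;> fin_cases j <;> simp_all [g] <;> simp_all [eq_comm]
  have hbij : Function.Bijective g := by
    rw [Fintype.bijective_iff_injective_and_card]
    exact ⟨hinj, by simp [h4]⟩
  refine ⟨(RelIso.mk (Equiv.ofBijective g hbij) ?_).symm⟩
  intro i j
  simp only [Equiv.ofBijective_apply]
  fin_cases i <;> fin_cases j <;>
    simp [g, k4e_adj, Sym2.eq_iff] <;>
    first
      | exact hab | exact fun h => hab h.symm
      | exact huv | exact huv.symm | exact hua | exact hua.symm
      | exact hub | exact hub.symm | exact hva | exact hva.symm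
      | exact hvb | exact hvb.symm

lemma of_iso_k4e {S : Finset V}
    (h : Nonempty (G.induce (S : Set V) ≃g K4MinusEdge)) :
    ∃ a ∈ S, ∃ b ∈ S, a ≠ b ∧ ¬ G.Adj a b ∧
      ∀ u ∈ S, ∀ v ∈ S, u ≠ v → ¬(u = a ∧ v = b) → ¬(u = b ∧ v = a) → G.Adj u v := by
  obtain ⟨e⟩ := h
  set A := e.symm 0
  set B := e.symm 1
  refine ⟨A, by simpa using A.2, B, by simpa using B.2, ?_, ?_, ?_⟩
  · intro hAB
    have : A = B := Subtype.ext hAB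
    have : (0 : Fin 4) = 1 := by
      have := congrArg e this
      simpa [A, B] using this
    simp at this
  · intro hadj
    have : (G.induce (S : Set V)).Adj A B := by
      simpa using hadj
    have := e.symm.map_rel_iff (a := (0 : Fin 4)) (b := 1) |>.not.mpr
    rw [k4e_adj] at this
    exact this (by simp) ‹(G.induce (S : Set V)).Adj A B›
  · intro x hx y hy hxy hnab hnba
    set X : (S : Set V) := ⟨x, by simpa using hx⟩
    set Y : (S : Set V) := ⟨y, by simpa using hy⟩
    have hXY : X ≠ Y := fun h => hxy (congrArg Subtype.val h)
    have heXY : e X ≠ e Y := by simpa using hXY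
    have hs : s(e X, e Y) ≠ s(0, 1) := by
      intro hss
      rw [Sym2.eq_iff] at hss
      rcases hss with ⟨h0, h1⟩ | ⟨h0, h1⟩
      · exact hnab ⟨congrArg Subtype.val (by simpa [A] using congrArg e.symm h0),
          congrArg Subtype.val (by simpa [B] using congrArg e.symm h1)⟩
      · exact hnba ⟨congrArg Subtype.val (by simpa [B] using congrArg e.symm h0),
          congrArg Subtype.val (by simpa [A] using congrArg e.symm h1)⟩
    have : K4MinusEdge.Adj (e X) (e Y) := k4e_adj.mpr ⟨heXY, hs⟩
    have := e.map_rel_iff.mp this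
    simpa using this

lemma fiber_singleton (hreg : G.IsRegularOfDegree 3) {S : Finset V} {u : V}
    (hu : cnbr G u = S)
    (hnotT : ¬ Nonempty (G.induce (S : Set V) ≃g K4MinusEdge))
    (hnotK : ¬ Nonempty (G.induce (S : Set V) ≃g (⊤ : SimpleGraph (Fin 4)))) :
    univ.filter (fun v => cnbr G v = S) = {u} := by
  have h4 : S.card = 4 := hu ▸ card_cnbr G hreg u
  have huS : u ∈ S := fiber_mem G hu
  ext w
  simp only [mem_filter, mem_univ, true_and, mem_singleton]
  constructor
  swap
  · rintro rfl; exact hu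
  intro hw
  by_contra hwu
  -- now we derive an iso, contradiction
  have hwS : w ∈ S := fiber_mem G hw
  have hadjS : ∀ x ∈ S, x ≠ u → G.Adj u x := by
    intro x hx hxu
    rcases (mem_cnbr G).mp (hu ▸ hx : x ∈ cnbr G u) with rfl | h
    · exact absurd rfl hxu
    · exact h
  have hadjSw : ∀ x ∈ S, x ≠ w → G.Adj w x := by
    intro x hx hxw
    rcases (mem_cnbr G).mp (hw ▸ hx : x ∈ cnbr G w) with rfl | h
    · exact absurd rfl hxw
    · exact h
  have hT2 : (S \ {u, w}).card = 2 := by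
    rw [card_sdiff_of_subset (by intro x hx; simp at hx; rcases hx with rfl|rfl <;> assumption)]
    rw [h4, card_insert_of_notMem (by simpa using (Ne.symm hwu : ¬ u = w)), card_singleton]
  obtain ⟨a, b, hab', hTab⟩ := card_eq_two.mp hT2
  have haS : a ∈ S := (mem_sdiff.mp (hTab ▸ (by simp : a ∈ ({a,b} : Finset V)))).1
  have hbS : b ∈ S := (mem_sdiff.mp (hTab ▸ (by simp : b ∈ ({a,b} : Finset V)))).1
  have hau : a ≠ u := by
    have := (mem_sdiff.mp (hTab ▸ (by simp : a ∈ ({a,b} : Finset V)))).2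
    simp at this; exact this.1
  have haw : a ≠ w := by
    have := (mem_sdiff.mp (hTab ▸ (by simp : a ∈ ({a,b} : Finset V)))).2
    simp at this; exact this.2
  have hbu : b ≠ u := by
    have := (mem_sdiff.mp (hTab ▸ (by simp : b ∈ ({a,b} : Finset V)))).2
    simp at this; exact this.1
  have hbw : b ≠ w := by
    have := (mem_sdiff.mp (hTab ▸ (by simp : b ∈ ({a,b} : Finset V)))).2
    simp at this; exact this.2
  have hSeq : S = {u, w, a, b} := by
    have hsub : ({u, w, a, b} : Finset V) ⊆ S := by
      intro x hx; simp at hx; rcases hx with rfl|rfl|rfl|rfl <;> assumption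
    refine (eq_of_subset_of_card_le hsub ?_).symm
    rw [h4]
    have huw' : ¬ u = w := fun h => hwu h.symm
    rw [card_insert_of_notMem (by simp [huw', Ne.symm hau, Ne.symm hbu]),
      card_insert_of_notMem (by simp [Ne.symm haw, Ne.symm hbw]),
      card_insert_of_notMem (by simpa using hab'), card_singleton]
  have huw : G.Adj u w := hadjS w hwS hwu
  have hua : G.Adj u a := hadjS a haS hau
  have hub : G.Adj u b := hadjS b hbS hbu
  have hwa : G.Adj w a := hadjSw a haS haw
  have hwb : G.Adj w b := hadjSw b hbS hbw
  by_cases hab : G.Adj a b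
  · refine hnotK (iso_top_of_clique G h4 ?_)
    intro x hx y hy hxy
    rw [hSeq] at hx hy
    simp at hx hy
    rcases hx with rfl|rfl|rfl|rfl <;> rcases hy with rfl|rfl|rfl|rfl <;>
      first
      | exact absurd rfl hxy
      | exact huw | exact huw.symm | exact hua | exact hua.symm
      | exact hub | exact hub.symm | exact hwa | exact hwa.symm
      | exact hwb | exact hwb.symm | exact hab | exact hab.symm
  · exact hnotT (iso_k4e_of G h4 huS hwS haS hbS (fun h => hwu h.symm) (Ne.symm hau) (Ne.symm hbu)
      (Ne.symm haw) (Ne.symm hbw) hab' huw hua hub hwa hwb hab)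

lemma ncard_filter_eq {α : Type*} [Fintype α] (p : α → Prop) [DecidablePred p] :
    {x | p x}.ncard = (univ.filter p).card := by
  rw [Set.ncard_eq_toFinset_card', Set.toFinset_setOf]

lemma nondom_card [DecidablePred (fun S : Finset V => S.card = 6 ∧ ¬ IsDomSet G S)]
    (hreg : G.IsRegularOfDegree 3) (hcard : Fintype.card V = 10) :
    (univ.filter (fun S : Finset V => S.card = 6 ∧ ¬ IsDomSet G S)).card
      = (univ.image (cnbr G)).card := by
  apply card_bij (fun S _ => Sᶜ)
  · intro S hS
    obtain ⟨h6, hnd⟩ := (mem_filter.mp hS).2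
    unfold IsDomSet at hnd
    push_neg at hnd
    obtain ⟨v, hvS, hfa⟩ := hnd
    refine mem_image.mpr ⟨v, mem_univ v, ?_⟩
    have hsub : cnbr G v ⊆ Sᶜ := by
      intro x hx
      rw [mem_compl]
      rcases (mem_cnbr G).mp hx with rfl | hadj
      · exact hvS
      · exact fun hxS => hfa x hxS hadj.symm
    refine eq_of_subset_of_card_le hsub ?_
    rw [card_compl, hcard, h6, card_cnbr G hreg]
  · intro S hS T hT h
    exact compl_inj_iff.mp h
  · intro T hT
    obtain ⟨v, _, hv⟩ := mem_image.mp hT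
    refine ⟨Tᶜ, mem_filter.mpr ⟨mem_univ _, ?_, ?_⟩, by simp⟩
    · rw [card_compl, hcard, ← hv, card_cnbr G hreg]
    · intro hdom
      have hvT : v ∉ Tᶜ := by simpa using (hv ▸ self_mem_cnbr G v : v ∈ T)
      obtain ⟨u, huT, hadj⟩ := hdom v hvT
      have : u ∈ T := hv ▸ (mem_cnbr G).mpr (Or.inr hadj.symm)
      simpa using mem_compl.mp huT this

end

open Finset in
theorem cubic_order_ten_domCount_six {V : Type*} [Fintype V] [DecidableEq V]
    (G : SimpleGraph V) [DecidableRel G.Adj]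
    (hreg : G.IsRegularOfDegree 3) (hcard : Fintype.card V = 10)
    (t s : ℕ)
    (ht : t = {S : Finset V | S.card = 4 ∧
      Nonempty (G.induce (S : Set V) ≃g K4MinusEdge)}.ncard)
    (hs : s = {S : Finset V | S.card = 4 ∧
      Nonempty (G.induce (S : Set V) ≃g (⊤ : SimpleGraph (Fin 4)))}.ncard) :
    domCount G 6 = Nat.choose 10 6 - (10 - t - 3 * s) := by
  classical
  set I := univ.image (cnbr G) with hI
  set T := univ.filter (fun S : Finset V => S.card = 4 ∧
    Nonempty (G.induce (S : Set V) ≃g K4MinusEdge)) with hTdef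
  set K := univ.filter (fun S : Finset V => S.card = 4 ∧
    Nonempty (G.induce (S : Set V) ≃g (⊤ : SimpleGraph (Fin 4)))) with hKdef
  have htT : t = T.card := by rw [ht, ncard_filter_eq]
  have hsK : s = K.card := by rw [hs, ncard_filter_eq]
  set m : Finset V → ℕ := fun S => (univ.filter (fun v => cnbr G v = S)).card with hm
  -- T facts
  have hT2 : ∀ S ∈ T, S ∈ I ∧ m S = 2 := by
    intro S hS
    obtain ⟨h4, hiso⟩ := (mem_filter.mp hS).2
    obtain ⟨a, ha, b, hb, hab', hab, hadj⟩ := of_iso_k4e G hiso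
    have hfib := fiber_k4e G hreg h4 ha hb hab' hab hadj
    have hsub : ({a, b} : Finset V) ⊆ S := by
      intro x hx; simp at hx; rcases hx with rfl | rfl <;> assumption
    have hcard2 : (S \ {a, b}).card = 2 := by
      rw [card_sdiff_of_subset hsub, h4, card_insert_of_notMem (by simpa using hab'), card_singleton]
    have hmS : m S = 2 := by rw [hm]; simpa [hfib] using hcard2
    refine ⟨?_, hmS⟩
    have hne : (S \ {a, b}).Nonempty := by rw [← card_pos, hcard2]; norm_num
    obtain ⟨w, hw⟩ := hne
    rw [← hfib] at hw
    exact mem_image.mpr ⟨w, mem_univ w, (mem_filter.mp hw).2⟩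
  -- K facts
  have hK4 : ∀ S ∈ K, S ∈ I ∧ m S = 4 := by
    intro S hS
    obtain ⟨h4, hiso⟩ := (mem_filter.mp hS).2
    have hcl := clique_of_iso_top G hiso
    have hfib := fiber_clique G hreg h4 hcl
    have hmS : m S = 4 := by rw [hm]; simpa [hfib] using h4
    refine ⟨?_, hmS⟩
    have hne : S.Nonempty := by rw [← card_pos, h4]; norm_num
    obtain ⟨w, hw⟩ := hne
    rw [← hfib] at hw
    exact mem_image.mpr ⟨w, mem_univ w, (mem_filter.mp hw).2⟩
  -- singleton fibers
  have hone : ∀ S ∈ I, S ∉ T → S ∉ K → m S = 1 := by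
    intro S hSI hST hSK
    obtain ⟨u, _, hu⟩ := mem_image.mp hSI
    have h4 : S.card = 4 := hu ▸ card_cnbr G hreg u
    have hnT : ¬ Nonempty (G.induce (S : Set V) ≃g K4MinusEdge) := by
      intro h; exact hST (mem_filter.mpr ⟨mem_univ _, h4, h⟩)
    have hnK : ¬ Nonempty (G.induce (S : Set V) ≃g (⊤ : SimpleGraph (Fin 4))) := by
      intro h; exact hSK (mem_filter.mpr ⟨mem_univ _, h4, h⟩)
    rw [hm]
    simp [fiber_singleton G hreg hu hnT hnK]
  -- disjointness
  have hdisj : Disjoint T K := by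
    rw [disjoint_left]
    intro S hST hSK
    obtain ⟨h4, hisoT⟩ := (mem_filter.mp hST).2
    obtain ⟨h4', hisoK⟩ := (mem_filter.mp hSK).2
    obtain ⟨a, ha, b, hb, hab', hab, _⟩ := of_iso_k4e G hisoT
    exact hab (clique_of_iso_top G hisoK a ha b hb hab')
  have hTKsub : T ∪ K ⊆ I := by
    intro S hS
    rcases mem_union.mp hS with h | h
    · exact (hT2 S h).1
    · exact (hK4 S h).1
  -- fiberwise sum
  have hsum : Fintype.card V = ∑ S ∈ I, m S := by
    rw [← card_univ]
    exact card_eq_sum_card_fiberwise (fun v _ => mem_image_of_mem _ (mem_univ v))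
  have hsplit : ∑ S ∈ I, m S = ∑ S ∈ I \ (T ∪ K), m S + ∑ S ∈ T ∪ K, m S :=
    (sum_sdiff hTKsub).symm
  have hsumTK : ∑ S ∈ T ∪ K, m S = T.card * 2 + K.card * 4 := by
    rw [sum_union hdisj, sum_const_nat (fun S hS => (hT2 S hS).2),
      sum_const_nat (fun S hS => (hK4 S hS).2)]
  have hsumrest : ∑ S ∈ I \ (T ∪ K), m S = (I \ (T ∪ K)).card * 1 := by
    refine sum_const_nat (fun S hS => ?_)
    obtain ⟨hSI, hSTK⟩ := mem_sdiff.mp hS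
    exact hone S hSI (fun h => hSTK (mem_union_left _ h)) (fun h => hSTK (mem_union_right _ h))
  have hcardsd : (I \ (T ∪ K)).card = I.card - (T.card + K.card) := by
    rw [card_sdiff_of_subset hTKsub, card_union_of_disjoint hdisj]
  have hle : T.card + K.card ≤ I.card := by
    rw [← card_union_of_disjoint hdisj]; exact card_le_card hTKsub
  have hIcard : I.card + t + 3 * s = 10 := by
    rw [htT, hsK]
    have h10 : (10 : ℕ) = ∑ S ∈ I, m S := hcard ▸ hsum
    omega
  have hND : (univ.filter (fun S : Finset V => S.card = 6 ∧ ¬ IsDomSet G S)).card = I.card :=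
    nondom_card G hreg hcard
  have hA6 : (univ.filter (fun S : Finset V => S.card = 6)).card = Nat.choose 10 6 := by
    have heq : univ.filter (fun S : Finset V => S.card = 6) = powersetCard 6 univ := by
      ext S; simp [mem_powersetCard_univ]
    rw [heq, card_powersetCard, card_univ, hcard]
  have hsplit6 := card_filter_add_card_filter_not
    (s := univ.filter (fun S : Finset V => S.card = 6)) (p := fun S => IsDomSet G S)
  have e1 : (univ.filter (fun S : Finset V => S.card = 6)).filter (fun S => IsDomSet G S)
      = univ.filter (fun S : Finset V => IsDomSet G S ∧ S.card = 6) := by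
    rw [filter_filter]
    ext S
    simp [and_comm]
  have e2 : (univ.filter (fun S : Finset V => S.card = 6)).filter (fun S => ¬ IsDomSet G S)
      = univ.filter (fun S : Finset V => S.card = 6 ∧ ¬ IsDomSet G S) := by
    rw [filter_filter]
  rw [e1, e2, hA6, hND] at hsplit6
  have hdc : domCount G 6
      = (univ.filter (fun S : Finset V => IsDomSet G S ∧ S.card = 6)).card := by
    rw [domCount, ncard_filter_eq]
  omega
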